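/- Let m(x,t) = e^{nt}·((1−e^{−2t})/2)^{|x|}·((1+e^{−2t})/2)^{n−|x|} for x ∈ {0,1}^n and t ≥ 0, where |x| is the number of ones in x. Then m satisfies the differential equation d/dt m(x,t) = Σ_{y: d(x,y)=1} m(y,t) with initial condition m(x,0) = 1 if x = 0̂ and 0 otherwise. -/

import Mathlib

/-- Hamming weight of a vertex of the `n`-cube. -/
def cubeWeight {n : ℕ} (x : Fin n → Bool) : ℕ :=
  (Finset.univ.filter fun i => x i = true).card

/-- Hamming distance on the `n`-cube. -/
def cubeDist {n : ℕ} (x y : Fin n → Bool) : ℕ :=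
  (Finset.univ.filter fun i => x i ≠ y i).card

/-- Expected particle count in the branching translation process. -/
noncomputable def btpMean (n : ℕ) (x : Fin n → Bool) (t : ℝ) : ℝ :=
  Real.exp (n * t) * ((1 - Real.exp (-2 * t)) / 2) ^ cubeWeight x *
    ((1 + Real.exp (-2 * t)) / 2) ^ (n - cubeWeight x)

lemma cubeWeight_le {n : ℕ} (x : Fin n → Bool) : cubeWeight x ≤ n := by
  classical
  simpa [cubeWeight] using
    (Finset.card_filter_le (Finset.univ : Finset (Fin n)) (fun i => x i = true))

lemma cubeWeight_update {n : ℕ} (x : Fin n → Bool) (i : Fin n) :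
    cubeWeight (Function.update x i (!x i)) =
      if x i = true then cubeWeight x - 1 else cubeWeight x + 1 := by
  classical
  unfold cubeWeight
  by_cases h : x i = true
  · rw [if_pos h]
    have hset : (Finset.univ.filter fun j => Function.update x i (!x i) j = true)
        = (Finset.univ.filter fun j => x j = true).erase i := by
      ext j
      by_cases hj : j = i
      · subst hj; simp [Function.update, h]
      · simp [Function.update, hj]
    rw [hset, Finset.card_erase_of_mem]
    simp [h]
  · rw [if_neg h]
    have hset : (Finset.univ.filter fun j => Function.update x i (!x i) j = true)
        = insert i (Finset.univ.filter fun j => x j = true) := by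
      ext j
      by_cases hj : j = i
      · subst hj; simp [Function.update, h]
      · simp [Function.update, hj]
    rw [hset, Finset.card_insert_of_notMem]
    simp [h]

lemma dist_one_eq_image {n : ℕ} (x : Fin n → Bool) :
    Finset.univ.filter (fun y => cubeDist x y = 1)
      = Finset.univ.image (fun i => Function.update x i (!x i)) := by
  classical
  ext y
  simp only [Finset.mem_filter, Finset.mem_univ, true_and, Finset.mem_image]
  constructor
  · intro h
    rw [cubeDist, Finset.card_eq_one] at h
    obtain ⟨i, hi⟩ := h
    refine ⟨i, ?_⟩
    have hmem : ∀ j : Fin n, (x j ≠ y j) ↔ j = i := by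
      intro j
      constructor
      · intro hj
        have : j ∈ Finset.univ.filter fun j => x j ≠ y j := by simpa using hj
        rw [hi] at this; simpa using this
      · rintro rfl
        have : j ∈ Finset.univ.filter fun j' => x j' ≠ y j' := by
          rw [hi]; simp
        simpa using this
    funext j
    by_cases hj : j = i
    · subst hj
      have hne : x j ≠ y j := (hmem j).mpr rfl
      simp only [Function.update_self]
      cases hx : x j <;> cases hy : y j <;> simp_all
    · have heq : x j = y j := by
        by_contra hne
        exact hj ((hmem j).mp hne)
      simp [Function.update, hj, heq]
  · rintro ⟨i, -, rfl⟩
    rw [cubeDist]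
    have : (Finset.univ.filter fun j => x j ≠ Function.update x i (!x i) j) = {i} := by
      ext j
      by_cases hj : j = i
      · subst hj; simp [Function.update]
      · simp [Function.update, hj]
    simp [this]

lemma key_identity (k m : ℕ) (E e : ℝ) :
    ((↑(k + m) * E) * ((1 - e) / 2) ^ k + E * (↑k * ((1 - e) / 2) ^ (k - 1) * e))
        * ((1 + e) / 2) ^ m
      + (E * ((1 - e) / 2) ^ k) * (↑m * ((1 + e) / 2) ^ (m - 1) * (-e))
    = ↑k * (E * ((1 - e) / 2) ^ (k - 1) * ((1 + e) / 2) ^ (k + m - (k - 1)))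
      + ↑m * (E * ((1 - e) / 2) ^ (k + 1) * ((1 + e) / 2) ^ (k + m - (k + 1))) := by
  rcases k with _ | p <;> rcases m with _ | q
  · norm_num
  · have h1 : 0 + (q + 1) - (0 - 1) = q + 1 := by omega
    have h2 : 0 + (q + 1) - (0 + 1) = q := by omega
    have h3 : q + 1 - 1 = q := by omega
    rw [h1, h2, h3]
    push_cast
    ring
  · have h1 : p + 1 + 0 - (p + 1 - 1) = 1 := by omega
    have h2 : p + 1 - 1 = p := by omega
    rw [h1, h2]
    push_cast
    ring
  · have h1 : p + 1 + (q + 1) - (p + 1 - 1) = q + 2 := by omega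
    have h2 : p + 1 + (q + 1) - (p + 1 + 1) = q := by omega
    have h3 : p + 1 - 1 = p := by omega
    have h4 : q + 1 - 1 = q := by omega
    rw [h1, h2, h3, h4]
    push_cast
    ring

theorem btpMean_solves_ode (n : ℕ) (x : Fin n → Bool) (t : ℝ) (ht : 0 ≤ t) :
    HasDerivAt (btpMean n x)
      (∑ y ∈ Finset.univ.filter (fun y => cubeDist x y = 1), btpMean n y t) t ∧
    btpMean n x 0 = if x = (fun _ => false) then 1 else 0 := by
  classical
  set k := cubeWeight x with hk
  have hkn : k ≤ n := cubeWeight_le x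
  set E := Real.exp (n * t) with hE
  set e := Real.exp (-2 * t) with he
  set A : ℝ := (1 - e) / 2 with hA
  set B : ℝ := (1 + e) / 2 with hB
  constructor
  · -- the sum over neighbors
    have hinj : ∀ i ∈ (Finset.univ : Finset (Fin n)), ∀ j ∈ Finset.univ,
        Function.update x i (!x i) = Function.update x j (!x j) → i = j := by
      intro i _ j _ hij
      by_contra hne
      have := congrFun hij i
      rw [Function.update_self, Function.update_of_ne hne] at this
      simp at this
    have hsum : (∑ y ∈ Finset.univ.filter (fun y => cubeDist x y = 1), btpMean n y t)
        = ∑ i : Fin n, btpMean n (Function.update x i (!x i)) t := by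
      rw [dist_one_eq_image, Finset.sum_image hinj]
    have hterm : ∀ i : Fin n, btpMean n (Function.update x i (!x i)) t
        = if x i = true then E * A ^ (k - 1) * B ^ (n - (k - 1))
          else E * A ^ (k + 1) * B ^ (n - (k + 1)) := by
      intro i
      rw [btpMean, cubeWeight_update]
      by_cases h : x i = true <;> simp [h, hE, he, hA, hB, hk]
    have hcardT : (Finset.univ.filter fun i => x i = true).card = k := rfl
    have hcardF : (Finset.univ.filter fun i => ¬ x i = true).card = n - k := by
      have := Finset.card_filter_add_card_filter_not
        (s := (Finset.univ : Finset (Fin n))) (p := fun i => x i = true)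
      simp only [Finset.card_univ, Fintype.card_fin] at this
      omega
    have hsum2 : (∑ y ∈ Finset.univ.filter (fun y => cubeDist x y = 1), btpMean n y t)
        = (k : ℝ) * (E * A ^ (k - 1) * B ^ (n - (k - 1)))
          + ((n - k : ℕ) : ℝ) * (E * A ^ (k + 1) * B ^ (n - (k + 1))) := by
      rw [hsum]
      rw [Finset.sum_congr rfl (fun i _ => hterm i), Finset.sum_ite,
        Finset.sum_const, Finset.sum_const, hcardT, hcardF]
      simp [nsmul_eq_mul]
    rw [hsum2]
    -- now compute the derivative
    have hde : HasDerivAt (fun s : ℝ => Real.exp (-2 * s)) (-2 * e) t := by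
      simpa [he, mul_comm] using ((hasDerivAt_id t).const_mul (-2 : ℝ)).exp
    have hdA : HasDerivAt (fun s : ℝ => (1 - Real.exp (-2 * s)) / 2) e t := by
      have := ((hasDerivAt_const (x := t) (c := (1 : ℝ))).sub hde).div_const 2
      exact this.congr_deriv (by ring)
    have hdB : HasDerivAt (fun s : ℝ => (1 + Real.exp (-2 * s)) / 2) (-e) t := by
      have := ((hasDerivAt_const (x := t) (c := (1 : ℝ))).add hde).div_const 2
      exact this.congr_deriv (by ring)
    have hdE : HasDerivAt (fun s : ℝ => Real.exp (n * s)) ((n : ℝ) * E) t := by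
      simpa [hE, mul_comm] using ((hasDerivAt_id t).const_mul (n : ℝ)).exp
    have hD : HasDerivAt (btpMean n x)
        ((((n : ℝ) * E) * A ^ k + E * ((k : ℝ) * A ^ (k - 1) * e)) * B ^ (n - k)
          + (E * A ^ k) * (((n - k : ℕ) : ℝ) * B ^ (n - k - 1) * (-e))) t := by
      have h0 : btpMean n x = fun s => Real.exp (n * s) *
          ((1 - Real.exp (-2 * s)) / 2) ^ k * ((1 + Real.exp (-2 * s)) / 2) ^ (n - k) := rfl
      rw [h0]
      exact (hdE.mul (hdA.pow k)).mul (hdB.pow (n - k))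
    have heq := key_identity k (n - k) E e
    have hnk : k + (n - k) = n := by omega
    rw [hnk, ← hA, ← hB] at heq
    exact heq ▸ hD
  · -- initial condition
    rw [btpMean]
    norm_num
    by_cases hx : x = fun _ => false
    · rw [if_pos hx]
      have : cubeWeight x = 0 := by
        subst hx
        simp [cubeWeight]
      simp [this]
    · rw [if_neg hx]
      have : k ≠ 0 := by
        intro h0
        apply hx
        funext i
        have : (Finset.univ.filter fun i => x i = true) = ∅ :=
          Finset.card_eq_zero.mp (by exact h0)
        have hi : x i ≠ true := by
          intro hi
          have hmem : i ∈ (Finset.univ.filter fun i => x i = true) := by simp [hi]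
          rw [this] at hmem
          simp at hmem
        simpa using hi
      have hkx : cubeWeight x ≠ 0 := by rw [← hk]; exact this
      simp [zero_pow hkx]
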